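/- Let n ≥ 1, let K ⊆ ℝⁿ be a nonempty compact ball-body, let E ⊆ ℝⁿ be a linear subspace and let P_E denote the orthogonal projection onto E. Then the image P_E(K^c) equals the c-dual of P_E(K) computed inside E, namely P_E(K^c) = {y ∈ E : ∀ x ∈ P_E(K), ‖x − y‖ ≤ 1}, and likewise P_E(K) = {x ∈ E : ∀ y ∈ P_E(K^c), ‖x − y‖ ≤ 1}. -/

import Mathlib

open Metric Set
open scoped RealInnerProductSpace

noncomputable section


/-- The `c`-dual of a set `A ⊆ ℝⁿ`. -/
def cDual {n : ℕ} (A : Set (EuclideanSpace ℝ (Fin n))) : Set (EuclideanSpace ℝ (Fin n)) :=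
  {y | ∀ x ∈ A, ‖x - y‖ ≤ 1}

private lemma r_one_lt_sq {x : ℝ} (h0 : 0 ≤ x) (h1 : 1 < x) : 1 < x^2 := by nlinarith
private lemma r_sq_le_one {x : ℝ} (h0 : 0 ≤ x) (h1 : x ≤ 1) : x^2 ≤ 1 := by nlinarith
private lemma r_one_sub_sq_pos {x : ℝ} (h0 : 0 ≤ x) (h1 : x < 1) : 0 < 1 - x^2 := by nlinarith
private lemma r_sq_lt_sq {x y : ℝ} (h0 : 0 ≤ x) (h1 : x < y) : x^2 < y^2 := by nlinarith
private lemma r_le_of_sq_le_one {x : ℝ} (h0 : 0 ≤ x) (h1 : x^2 ≤ 1) : x ≤ 1 := by nlinarith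
private lemma r_combo {lam mu d i0 i1 : ℝ} (hl : 0 ≤ lam) (hm : 0 ≤ mu)
    (hs : 1 ≤ lam + mu) (hd : 0 ≤ d) (h0 : d ≤ i0) (h1 : d ≤ i1) :
    d ≤ lam*i0 + mu*i1 := by
  nlinarith [mul_le_mul_of_nonneg_left h0 hl, mul_le_mul_of_nonneg_left h1 hm,
    mul_le_mul_of_nonneg_right hs hd]
private lemma r_final {c ue h up : ℝ} (hh2 : h^2 = 1 - c^2) (hup2 : up^2 = 1 - ue^2)
    (huec : ue < c) (hge1 : 1 ≤ c*ue + h*up) : False := by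
  nlinarith [mul_pos (show (0:ℝ) < c - ue by linarith) (show (0:ℝ) < c - ue by linarith),
    mul_self_nonneg (h - up)]

variable {n : ℕ}

set_option maxHeartbeats 1000000 in
lemma add_unit_mem_cDual {K : Set (EuclideanSpace ℝ (Fin n))}
    (hbb : K = cDual (cDual K)) (hLne : (cDual K).Nonempty)
    {u k₀ : EuclideanSpace ℝ (Fin n)} (hu : ‖u‖ = 1) (hk₀ : k₀ ∈ K)
    (hmin : ∀ k ∈ K, ⟪u, k₀⟫ ≤ ⟪u, k⟫) :
    k₀ + u ∈ cDual K := by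
  intro k₁ hk₁
  by_contra hgt
  push_neg at hgt
  obtain ⟨w₀, hw₀⟩ := hLne
  obtain ⟨a, ha⟩ : ∃ a, a = k₁ - k₀ := ⟨_, rfl⟩
  have hua : 0 ≤ ⟪u, a⟫ := by
    have h' := hmin k₁ hk₁
    rw [ha, inner_sub_right]
    linarith only [h']
  have h1 : 1 < ‖a - u‖ := by
    have h2 : k₁ - (k₀ + u) = a - u := by rw [ha]; abel
    rwa [h2] at hgt
  have hsq : ‖a - u‖^2 = ‖a‖^2 - 2*⟪a,u⟫ + 1 := by
    rw [norm_sub_sq_real, hu]; ring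
  have hlt : ⟪u, a⟫ < ‖a‖^2/2 := by
    have hs1 : 1 < ‖a - u‖^2 := r_one_lt_sq (norm_nonneg _) h1
    have hcomm : ⟪u, a⟫ = ⟪a, u⟫ := real_inner_comm a u
    linarith only [hs1, hsq, hcomm]
  have hapos : 0 < ‖a‖ := by
    rcases (norm_nonneg a).lt_or_eq with h | h
    · exact h
    · exfalso
      rw [← h] at hlt
      have hz : (0:ℝ)^2/2 = 0 := by norm_num
      rw [hz] at hlt
      linarith only [hua, hlt]
  have halen : ‖a‖ ≤ 2 := by
    have hn0 : ‖k₀ - w₀‖ ≤ 1 := hw₀ k₀ hk₀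
    have hn1 : ‖k₁ - w₀‖ ≤ 1 := hw₀ k₁ hk₁
    have h2 : a = (k₁ - w₀) + (w₀ - k₀) := by rw [ha]; abel
    have h3 : ‖w₀ - k₀‖ ≤ 1 := by rwa [norm_sub_rev] at hn0
    calc ‖a‖ = ‖(k₁ - w₀) + (w₀ - k₀)‖ := by rw [← h2]
      _ ≤ ‖k₁ - w₀‖ + ‖w₀ - k₀‖ := norm_add_le _ _
      _ ≤ 2 := by linarith only [hn1, h3]
  obtain ⟨c, hc⟩ : ∃ c : ℝ, c = ‖a‖/2 := ⟨_, rfl⟩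
  have hcpos : 0 < c := by rw [hc]; positivity
  have hc1 : c ≤ 1 := by rw [hc]; linarith only [halen]
  have ha2c : ‖a‖ = 2*c := by rw [hc]; ring
  obtain ⟨e, he, hae⟩ : ∃ e, ‖e‖ = 1 ∧ a = (2*c) • e := by
    refine ⟨(‖a‖)⁻¹ • a, ?_, ?_⟩
    · rw [norm_smul, Real.norm_eq_abs, abs_inv, abs_of_pos hapos,
        inv_mul_cancel₀ hapos.ne']
    · rw [smul_smul, ← ha2c, mul_inv_cancel₀ hapos.ne', one_smul]
  obtain ⟨ue, hue_def⟩ : ∃ ue : ℝ, ue = ⟪u, e⟫ := ⟨_, rfl⟩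
  have hua' : ⟪u, a⟫ = 2*c*ue := by
    rw [hae, real_inner_smul_right, ← hue_def]
  have h2c : (0:ℝ) < 2*c := by linarith only [hcpos]
  have hue0 : 0 ≤ ue := by
    have h' : 2*c*0 ≤ 2*c*ue := by rw [mul_zero, ← hua']; exact hua
    exact le_of_mul_le_mul_left h' h2c
  have huec : ue < c := by
    have hq : ‖a‖^2/2 = 2*c*c := by rw [ha2c]; ring
    have h' : 2*c*ue < 2*c*c := by rw [← hua', ← hq]; exact hlt
    exact lt_of_mul_lt_mul_left h' h2c.le
  rcases eq_or_lt_of_le hc1 with hceq | hclt1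
  · -- degenerate case c = 1 : every point of cDual K is k₀ + e
    have ha2 : ‖a‖ = 2 := by rw [ha2c, hceq]; ring
    have hwall : ∀ w ∈ cDual K, w = k₀ + e := by
      intro w hw
      have hv0 : ‖w - k₀‖ ≤ 1 := by rw [norm_sub_rev]; exact hw k₀ hk₀
      have hv1 : ‖k₁ - w‖ ≤ 1 := hw k₁ hk₁
      obtain ⟨v₀, hv₀def⟩ : ∃ v, v = w - k₀ := ⟨_, rfl⟩
      obtain ⟨v₁, hv₁def⟩ : ∃ v, v = k₁ - w := ⟨_, rfl⟩
      rw [← hv₀def] at hv0; rw [← hv₁def] at hv1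
      have hsum : v₀ + v₁ = a := by rw [hv₀def, hv₁def, ha]; abel
      have h4 : ‖v₀ + v₁‖^2 = 4 := by rw [hsum, ha2]; norm_num
      have hv0sq : ‖v₀‖^2 ≤ 1 := r_sq_le_one (norm_nonneg _) hv0
      have hv1sq : ‖v₁‖^2 ≤ 1 := r_sq_le_one (norm_nonneg _) hv1
      have hip : 1 ≤ ⟪v₀, v₁⟫ := by
        have h5 := norm_add_sq_real v₀ v₁
        linarith only [h4, h5, hv0sq, hv1sq]
      have hzero : ‖v₀ - v₁‖^2 ≤ 0 := by
        have h5 := norm_sub_sq_real v₀ v₁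
        linarith only [h5, hv0sq, hv1sq, hip]
      have hveq : v₀ = v₁ := by
        have h0 : ‖v₀ - v₁‖^2 = 0 := le_antisymm hzero (sq_nonneg _)
        have h0' : ‖v₀ - v₁‖ = 0 := pow_eq_zero_iff two_ne_zero |>.mp h0
        rwa [norm_eq_zero, sub_eq_zero] at h0'
      have h2v : v₀ + v₀ = a := by nth_rewrite 2 [hveq]; exact hsum
      have hae1 : a = (2:ℝ) • e := by rw [hae, hceq]; norm_num
      have hv₀e : v₀ = e := by
        have h2 : (2:ℝ) • v₀ = (2:ℝ) • e := by rw [two_smul, h2v, hae1]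
        exact smul_right_injective _ (by norm_num) h2
      rw [hv₀e] at hv₀def
      rw [hv₀def]; abel
    have hpK : k₀ + e - u ∈ K := by
      rw [hbb]
      intro w hw
      rw [hwall w hw]
      have h2 : k₀ + e - (k₀ + e - u) = u := by abel
      rw [h2, hu]
    have hfin := hmin _ hpK
    rw [inner_sub_right, inner_add_right, real_inner_self_eq_norm_sq, hu, one_pow,
      ← hue_def] at hfin
    rw [hceq] at huec
    linarith only [hfin, huec]
  · -- main case c < 1
    have hcsq : 0 < 1 - c^2 := r_one_sub_sq_pos hcpos.le hclt1
    have huesq : 0 < 1 - ue^2 := r_one_sub_sq_pos hue0 (lt_of_lt_of_le huec hc1)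
    obtain ⟨h, hh_def⟩ : ∃ h : ℝ, h = Real.sqrt (1 - c^2) := ⟨_, rfl⟩
    obtain ⟨up, hup_def⟩ : ∃ v : ℝ, v = Real.sqrt (1 - ue^2) := ⟨_, rfl⟩
    have hh2 : h^2 = 1 - c^2 := by rw [hh_def]; exact Real.sq_sqrt hcsq.le
    have hup2 : up^2 = 1 - ue^2 := by rw [hup_def]; exact Real.sq_sqrt huesq.le
    have hhpos : 0 < h := by rw [hh_def]; exact Real.sqrt_pos.mpr hcsq
    have hupnn : 0 ≤ up := by rw [hup_def]; exact Real.sqrt_nonneg _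
    have huph : h < up := by
      rw [hh_def, hup_def]
      refine Real.sqrt_lt_sqrt hcsq.le ?_
      have := r_sq_lt_sq hue0 huec
      linarith only [this]
    have huppos : 0 < up := hhpos.trans huph
    obtain ⟨g, hge, hgn, hu_decomp⟩ :
        ∃ g, ⟪e, g⟫ = 0 ∧ ‖g‖ = 1 ∧ u = ue • e + up • g := by
      refine ⟨up⁻¹ • (u - ue • e), ?_, ?_, ?_⟩
      · rw [real_inner_smul_right, inner_sub_right, real_inner_smul_right,
          real_inner_self_eq_norm_sq, he]
        have h2 : ⟪e, u⟫ = ue := by rw [real_inner_comm, ← hue_def]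
        rw [h2]; ring
      · have hnormx : ‖u - ue • e‖^2 = up^2 := by
          rw [norm_sub_sq_real, norm_smul, real_inner_smul_right, hu, he, hup2,
            ← hue_def]
          simp only [Real.norm_eq_abs, mul_pow, sq_abs, mul_one, one_pow]
          ring
        have hxeq : ‖u - ue • e‖ = up := by
          have hfac : (‖u - ue • e‖ - up) * (‖u - ue • e‖ + up) = 0 := by
            linear_combination hnormx
          rcases mul_eq_zero.mp hfac with h' | h'
          · linarith only [h']
          · exfalso
            have h'' := norm_nonneg (u - ue • e)
            linarith only [h', h'', huppos]
        rw [norm_smul, Real.norm_eq_abs, abs_inv, abs_of_pos huppos, hxeq,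
          inv_mul_cancel₀ huppos.ne']
      · rw [smul_inv_smul₀ huppos.ne']; abel
    have hnorm_comb : ∀ s t : ℝ, ‖s • e + t • g‖^2 = s^2 + t^2 := by
      intro s t
      rw [norm_add_sq_real, real_inner_smul_left, real_inner_smul_right, hge,
        norm_smul, norm_smul, he, hgn]
      simp only [Real.norm_eq_abs, mul_one, mul_pow, sq_abs]
      ring
    have hinner_comb : ∀ s t : ℝ, ⟪u, s • e + t • g⟫ = s*ue + t*up := by
      intro s t
      rw [inner_add_right, real_inner_smul_right, real_inner_smul_right]
      have h2 : ⟪u, g⟫ = up := by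
        nth_rewrite 1 [hu_decomp]
        rw [inner_add_left, real_inner_smul_left, real_inner_smul_left, hge,
          real_inner_self_eq_norm_sq, hgn]
        ring
      rw [h2, ← hue_def]
    obtain ⟨ν₀, hν₀def⟩ : ∃ v, v = c • e + h • g := ⟨_, rfl⟩
    obtain ⟨ν₁, hν₁def⟩ : ∃ v, v = (-c) • e + h • g := ⟨_, rfl⟩
    have hν₀norm : ‖ν₀‖^2 = 1 := by
      rw [hν₀def, hnorm_comb]
      linarith only [hh2]
    have hν₁norm : ‖ν₁‖^2 = 1 := by
      rw [hν₁def, hnorm_comb]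
      linear_combination hh2
    have hνdiff : ν₀ - ν₁ = a := by
      rw [hν₀def, hν₁def, hae]; module
    obtain ⟨lam, hlam_def⟩ : ∃ l : ℝ, l = (up/h + ue/c)/2 := ⟨_, rfl⟩
    obtain ⟨mu, hmu_def⟩ : ∃ m : ℝ, m = (up/h - ue/c)/2 := ⟨_, rfl⟩
    have huech : ue/c < 1 := (div_lt_one hcpos).mpr huec
    have huech0 : 0 ≤ ue/c := div_nonneg hue0 hcpos.le
    have huph1 : 1 < up/h := (one_lt_div hhpos).mpr huph
    have hlamnn : 0 ≤ lam := by rw [hlam_def]; linarith only [huech0, huph1]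
    have hmunn : 0 ≤ mu := by rw [hmu_def]; linarith only [huech, huph1]
    have hsum1 : 1 ≤ lam + mu := by
      rw [hlam_def, hmu_def]; linarith only [huph1]
    have hcomb : lam • ν₀ + mu • ν₁ = u := by
      rw [hν₀def, hν₁def, hu_decomp]
      match_scalars
      · rw [hlam_def, hmu_def]
        field_simp
        ring
      · rw [hlam_def, hmu_def]
        field_simp
        ring
    have hkey : ∀ w ∈ cDual K, ‖w - (k₀ + ν₀ - u)‖ ≤ 1 := by
      intro w hw
      obtain ⟨δ, hδdef⟩ : ∃ d, d = k₀ + ν₀ - w := ⟨_, rfl⟩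
      have hδ₀ : ‖δ‖^2/2 ≤ ⟪δ, ν₀⟫ := by
        have h1' : ‖k₀ - w‖ ≤ 1 := hw k₀ hk₀
        have h2' : k₀ - w = δ - ν₀ := by rw [hδdef]; abel
        rw [h2'] at h1'
        have hsq' : ‖δ - ν₀‖^2 ≤ 1 := r_sq_le_one (norm_nonneg _) h1'
        have h3' : ‖δ - ν₀‖^2 = ‖δ‖^2 - 2*⟪δ,ν₀⟫ + 1 := by
          rw [norm_sub_sq_real, hν₀norm]
        linarith only [hsq', h3']
      have hδ₁ : ‖δ‖^2/2 ≤ ⟪δ, ν₁⟫ := by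
        have h1' : ‖k₁ - w‖ ≤ 1 := hw k₁ hk₁
        have hk₁eq : k₁ = k₀ + a := by rw [ha]; abel
        have h2' : k₁ - w = δ - ν₁ := by
          rw [hδdef, hk₁eq, ← hνdiff]; abel
        rw [h2'] at h1'
        have hsq' : ‖δ - ν₁‖^2 ≤ 1 := r_sq_le_one (norm_nonneg _) h1'
        have h3' : ‖δ - ν₁‖^2 = ‖δ‖^2 - 2*⟪δ,ν₁⟫ + 1 := by
          rw [norm_sub_sq_real, hν₁norm]
        linarith only [hsq', h3']
      have huδ : ‖δ‖^2/2 ≤ ⟪u, δ⟫ := by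
        have h1' : ⟪u, δ⟫ = lam * ⟪ν₀, δ⟫ + mu * ⟪ν₁, δ⟫ := by
          rw [← hcomb, inner_add_left, real_inner_smul_left, real_inner_smul_left]
        have hc₀ : ⟪ν₀, δ⟫ = ⟪δ, ν₀⟫ := real_inner_comm _ _
        have hc₁ : ⟪ν₁, δ⟫ = ⟪δ, ν₁⟫ := real_inner_comm _ _
        rw [h1', hc₀, hc₁]
        exact r_combo hlamnn hmunn hsum1 (by positivity) hδ₀ hδ₁
      have h2' : w - (k₀ + ν₀ - u) = u - δ := by rw [hδdef]; abel
      rw [h2']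
      have h3' : ‖u - δ‖^2 = 1 - 2*⟪u,δ⟫ + ‖δ‖^2 := by
        rw [norm_sub_sq_real, hu]; ring
      have h4' : ‖u - δ‖^2 ≤ 1 := by linarith only [h3', huδ]
      exact r_le_of_sq_le_one (norm_nonneg _) h4'
    have hpK : k₀ + ν₀ - u ∈ K := by
      rw [hbb]; intro w hw; exact hkey w hw
    have hfin := hmin _ hpK
    have hν₀inner : ⟪u, ν₀⟫ = c*ue + h*up := by rw [hν₀def]; exact hinner_comb c h
    rw [inner_sub_right, inner_add_right, real_inner_self_eq_norm_sq, hu, one_pow,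
      hν₀inner] at hfin
    have hge1 : 1 ≤ c*ue + h*up := by linarith only [hfin]
    exact r_final hh2 hup2 huec hge1

lemma convex_cDual (A : Set (EuclideanSpace ℝ (Fin n))) : Convex ℝ (cDual A) := by
  intro z hz z' hz' p q hp hq hpq
  intro x hx
  obtain rfl : q = 1 - p := by linarith
  have hx' : x - (p • z + (1-p) • z') = p • (x - z) + (1-p) • (x - z') := by module
  calc ‖x - (p • z + (1-p) • z')‖ = ‖p • (x - z) + (1-p) • (x - z')‖ := by rw [hx']
    _ ≤ ‖p • (x - z)‖ + ‖(1-p) • (x - z')‖ := norm_add_le _ _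
    _ = p * ‖x - z‖ + (1-p) * ‖x - z'‖ := by
        rw [norm_smul, norm_smul, Real.norm_of_nonneg hp, Real.norm_of_nonneg hq]
    _ ≤ p * 1 + (1-p) * 1 := by
        have h1 := hz x hx
        have h2 := hz' x hx
        gcongr
    _ = 1 := by ring

lemma isCompact_cDual {K : Set (EuclideanSpace ℝ (Fin n))} (hne : K.Nonempty) :
    IsCompact (cDual K) := by
  obtain ⟨k, hk⟩ := hne
  have hclosed : IsClosed (cDual K) := by
    have h1 : cDual K = ⋂ x ∈ K, Metric.closedBall x 1 := by
      ext z
      simp only [cDual, mem_setOf_eq, mem_iInter, Metric.mem_closedBall, dist_eq_norm]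
      exact ⟨fun h i hi => by rw [norm_sub_rev]; exact h i hi,
        fun h i hi => by rw [norm_sub_rev]; exact h i hi⟩
    rw [h1]
    exact isClosed_biInter fun x _ => isClosed_closedBall
  have hsub : cDual K ⊆ Metric.closedBall k 1 := fun z hz => by
    have := hz k hk
    simpa [Metric.mem_closedBall, dist_eq_norm, norm_sub_rev] using this
  exact (isCompact_closedBall k 1).of_isClosed_subset hclosed hsub

lemma cDual_nonempty (hn : 1 ≤ n) {K : Set (EuclideanSpace ℝ (Fin n))}
    (hcomp : IsCompact K) (hbb : K = cDual (cDual K)) : (cDual K).Nonempty := by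
  by_contra h
  rw [not_nonempty_iff_eq_empty] at h
  have hK : K = univ := by
    rw [hbb, h]; ext z; simp [cDual]
  obtain ⟨R, hR⟩ := hcomp.isBounded.subset_closedBall 0
  set x : EuclideanSpace ℝ (Fin n) := EuclideanSpace.single ⟨0, hn⟩ (R+1) with hxdef
  have hx : x ∈ K := hK ▸ mem_univ x
  have h0 : (0 : EuclideanSpace ℝ (Fin n)) ∈ K := hK ▸ mem_univ 0
  have hR0 : (0:ℝ) ≤ R := by simpa using hR h0
  have hxR := hR hx
  rw [Metric.mem_closedBall, dist_zero_right] at hxR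
  have hnorm : ‖x‖ = |R+1| := by
    rw [hxdef, EuclideanSpace.norm_single]; exact Real.norm_eq_abs _
  rw [hnorm, abs_of_nonneg (by linarith)] at hxR
  linarith

set_option maxHeartbeats 1000000 in
lemma proj_cDual_key (hn : 1 ≤ n) {K : Set (EuclideanSpace ℝ (Fin n))}
    (hne : K.Nonempty) (hcomp : IsCompact K) (hbb : K = cDual (cDual K))
    (E : Submodule ℝ (EuclideanSpace ℝ (Fin n))) (y : E)
    (hy : ∀ k ∈ K, ‖(Submodule.orthogonalProjectionOnto E k) - y‖ ≤ 1) :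
    ∃ z ∈ cDual K, Submodule.orthogonalProjectionOnto E z = y := by
  have hLne : (cDual K).Nonempty := cDual_nonempty hn hcomp hbb
  have hLcomp : IsCompact (cDual K) := isCompact_cDual hne
  have hLconv : Convex ℝ (cDual K) := convex_cDual K
  have horth : ∀ (v w : EuclideanSpace ℝ (Fin n)), w ∈ E →
      ⟪w, v - (Submodule.orthogonalProjectionOnto E v : EuclideanSpace ℝ (Fin n))⟫ = 0 := by
    intro v w hw
    exact (Submodule.mem_orthogonal E _).mp (Submodule.sub_starProjection_mem_orthogonal (K := E) v) w hw
  have hcont : Continuous fun z : EuclideanSpace ℝ (Fin n) =>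
      ‖((y : EuclideanSpace ℝ (Fin n)) -
        (Submodule.orthogonalProjectionOnto E z : EuclideanSpace ℝ (Fin n)))‖ :=
    (continuous_const.sub (continuous_subtype_val.comp
      (Submodule.orthogonalProjectionOnto E).continuous)).norm
  obtain ⟨z₀, hz₀L, hz₀min⟩ := hLcomp.exists_isMinOn hLne hcont.continuousOn
  obtain ⟨A, hA⟩ : ∃ A, A = (y : EuclideanSpace ℝ (Fin n)) -
      (Submodule.orthogonalProjectionOnto E z₀ : EuclideanSpace ℝ (Fin n)) := ⟨_, rfl⟩
  rcases eq_or_lt_of_le (norm_nonneg A) with hA0 | hApos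
  · -- the minimum is 0, so the projection of z₀ is y
    refine ⟨z₀, hz₀L, ?_⟩
    have h0 : A = 0 := by rw [← norm_eq_zero, ← hA0]
    rw [hA, sub_eq_zero] at h0
    exact Subtype.coe_injective h0.symm
  · -- the minimum d = ‖A‖ is positive; derive a contradiction
    exfalso
    have hAE : A ∈ E := by
      rw [hA]
      exact E.sub_mem y.2 (Submodule.orthogonalProjectionOnto E z₀).2
    obtain ⟨u, hu_def⟩ : ∃ u, u = (‖A‖)⁻¹ • A := ⟨_, rfl⟩
    have huE : u ∈ E := by rw [hu_def]; exact E.smul_mem _ hAE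
    have hu : ‖u‖ = 1 := by
      rw [hu_def, norm_smul, Real.norm_eq_abs, abs_inv, abs_of_pos hApos,
        inv_mul_cancel₀ hApos.ne']
    -- support property of u at z₀ over cDual K
    have hsupp : ∀ z ∈ cDual K, ⟪u, z⟫ ≤ ⟪u, z₀⟫ := by
      intro z hz
      obtain ⟨B, hB⟩ : ∃ B, B = (Submodule.orthogonalProjectionOnto E z : EuclideanSpace ℝ (Fin n)) -
          (Submodule.orthogonalProjectionOnto E z₀ : EuclideanSpace ℝ (Fin n)) := ⟨_, rfl⟩
      have hAB : ⟪A, B⟫ ≤ 0 := by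
        by_contra hpos
        push_neg at hpos
        have hBne : B ≠ 0 := by
          intro h0
          rw [h0, inner_zero_right] at hpos
          exact lt_irrefl _ hpos
        have hBpos : 0 < ‖B‖^2 := pow_pos (norm_pos_iff.mpr hBne) 2
        obtain ⟨t, ht_def⟩ : ∃ t : ℝ, t = min 1 (⟪A,B⟫/‖B‖^2) := ⟨_, rfl⟩
        have ht0 : 0 < t := by
          rw [ht_def]
          exact lt_min one_pos (div_pos hpos hBpos)
        have ht1 : t ≤ 1 := by rw [ht_def]; exact min_le_left _ _
        have htB : t * ‖B‖^2 ≤ ⟪A,B⟫ := by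
          have h2 : t ≤ ⟪A,B⟫/‖B‖^2 := by rw [ht_def]; exact min_le_right _ _
          calc t * ‖B‖^2 ≤ (⟪A,B⟫/‖B‖^2) * ‖B‖^2 :=
                mul_le_mul_of_nonneg_right h2 (sq_nonneg _)
            _ = ⟪A,B⟫ := div_mul_cancel₀ _ hBpos.ne'
        have hzt : z₀ + t • (z - z₀) ∈ cDual K :=
          hLconv.add_smul_sub_mem hz₀L hz ⟨ht0.le, ht1⟩
        have hPt : (Submodule.orthogonalProjectionOnto E (z₀ + t • (z - z₀)) :
            EuclideanSpace ℝ (Fin n)) =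
            (Submodule.orthogonalProjectionOnto E z₀ : EuclideanSpace ℝ (Fin n)) + t • B := by
          rw [map_add, map_smul, map_sub]
          push_cast
          rw [hB]
        have hmin' := hz₀min hzt
        simp only [mem_setOf_eq] at hmin'
        rw [hPt] at hmin'
        have hdiff : (y : EuclideanSpace ℝ (Fin n)) -
            ((Submodule.orthogonalProjectionOnto E z₀ : EuclideanSpace ℝ (Fin n)) + t • B) =
            A - t • B := by rw [hA]; abel
        rw [hdiff, ← hA] at hmin'
        -- hmin' : ‖A‖ ≤ ‖A - t • B‖
        have hsq1 : ‖A‖^2 ≤ ‖A - t • B‖^2 :=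
          pow_le_pow_left₀ (norm_nonneg _) hmin' 2
        have hsq2 : ‖A - t • B‖^2 = ‖A‖^2 - 2*t*⟪A,B⟫ + t^2*‖B‖^2 := by
          rw [norm_sub_sq_real, real_inner_smul_right, norm_smul, Real.norm_eq_abs,
            mul_pow, sq_abs]
          ring
        have hineq : 2*t*⟪A,B⟫ ≤ t^2*‖B‖^2 := by linarith only [hsq1, hsq2]
        have hineq2 : t*(2*⟪A,B⟫) ≤ t*(t*‖B‖^2) := by
          have : t^2*‖B‖^2 = t*(t*‖B‖^2) := by ring
          rw [this] at hineq
          calc t*(2*⟪A,B⟫) = 2*t*⟪A,B⟫ := by ring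
            _ ≤ t*(t*‖B‖^2) := hineq
        have h3 : 2*⟪A,B⟫ ≤ t*‖B‖^2 := le_of_mul_le_mul_left hineq2 ht0
        linarith only [h3, htB, hpos]
      -- now transfer to ⟪u, z - z₀⟫ ≤ 0
      have hzz : z - z₀ = B + (z - (Submodule.orthogonalProjectionOnto E z :
          EuclideanSpace ℝ (Fin n))) - (z₀ - (Submodule.orthogonalProjectionOnto E z₀ :
          EuclideanSpace ℝ (Fin n))) := by rw [hB]; abel
      have hAz : ⟪A, z - z₀⟫ ≤ 0 := by
        rw [hzz, inner_sub_right, inner_add_right, horth z A hAE, horth z₀ A hAE]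
        linarith only [hAB]
      have hu_ineq : ⟪u, z - z₀⟫ ≤ 0 := by
        rw [hu_def, real_inner_smul_left]
        have hinv : 0 ≤ (‖A‖)⁻¹ := by positivity
        exact mul_nonpos_of_nonneg_of_nonpos hinv hAz
      rw [inner_sub_right] at hu_ineq
      linarith only [hu_ineq]
    -- lower bound on ⟪u, k⟫ for k ∈ K
    have hlow : ∀ k ∈ K, ⟪u, (y : EuclideanSpace ℝ (Fin n))⟫ - 1 ≤ ⟪u, k⟫ := by
      intro k hk
      have hyk : (y : EuclideanSpace ℝ (Fin n)) - k =
          ((y : EuclideanSpace ℝ (Fin n)) - (Submodule.orthogonalProjectionOnto E k :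
            EuclideanSpace ℝ (Fin n))) - (k - (Submodule.orthogonalProjectionOnto E k :
            EuclideanSpace ℝ (Fin n))) := by abel
      have h1 : ⟪u, (y : EuclideanSpace ℝ (Fin n)) - k⟫ =
          ⟪u, (y : EuclideanSpace ℝ (Fin n)) - (Submodule.orthogonalProjectionOnto E k :
            EuclideanSpace ℝ (Fin n))⟫ := by
        rw [hyk, inner_sub_right, horth k u huE]
        ring
      have h2 : ⟪u, (y : EuclideanSpace ℝ (Fin n)) - (Submodule.orthogonalProjectionOnto E k :
          EuclideanSpace ℝ (Fin n))⟫ ≤ 1 := by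
        calc ⟪u, (y : EuclideanSpace ℝ (Fin n)) - (Submodule.orthogonalProjectionOnto E k :
              EuclideanSpace ℝ (Fin n))⟫ ≤
            ‖u‖ * ‖(y : EuclideanSpace ℝ (Fin n)) - (Submodule.orthogonalProjectionOnto E k :
              EuclideanSpace ℝ (Fin n))‖ := real_inner_le_norm _ _
          _ = ‖(y : EuclideanSpace ℝ (Fin n)) - (Submodule.orthogonalProjectionOnto E k :
              EuclideanSpace ℝ (Fin n))‖ := by rw [hu, one_mul]
          _ ≤ 1 := by
              have h3 := hy k hk
              have h4 : ((Submodule.orthogonalProjectionOnto E k - y : E) :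
                  EuclideanSpace ℝ (Fin n)) =
                  (Submodule.orthogonalProjectionOnto E k : EuclideanSpace ℝ (Fin n)) -
                  (y : EuclideanSpace ℝ (Fin n)) := rfl
              rw [norm_sub_rev]
              calc ‖(Submodule.orthogonalProjectionOnto E k : EuclideanSpace ℝ (Fin n)) -
                    (y : EuclideanSpace ℝ (Fin n))‖ =
                  ‖(Submodule.orthogonalProjectionOnto E k - y : E)‖ := by
                    rw [Submodule.coe_norm, h4]
                _ ≤ 1 := h3
      rw [inner_sub_right] at h1
      linarith only [h1, h2]
    -- minimize ⟪u, ·⟫ over K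
    have hcont2 : Continuous fun k : EuclideanSpace ℝ (Fin n) => ⟪u, k⟫ :=
      Continuous.inner continuous_const continuous_id
    obtain ⟨k₀, hk₀K, hk₀min⟩ := hcomp.exists_isMinOn hne hcont2.continuousOn
    have hmin : ∀ k ∈ K, ⟪u, k₀⟫ ≤ ⟪u, k⟫ := fun k hk => hk₀min hk
    have hz₁ : k₀ + u ∈ cDual K := add_unit_mem_cDual hbb hLne hu hk₀K hmin
    -- derive the contradiction
    have h1 : ⟪u, k₀ + u⟫ = ⟪u, k₀⟫ + 1 := by
      rw [inner_add_right, real_inner_self_eq_norm_sq, hu, one_pow]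
    have h2 := hlow k₀ hk₀K
    have h3 := hsupp _ hz₁
    have h4 : ⟪u, (y : EuclideanSpace ℝ (Fin n))⟫ = ⟪u, z₀⟫ + ‖A‖ := by
      have hy_eq : (y : EuclideanSpace ℝ (Fin n)) = A +
          (Submodule.orthogonalProjectionOnto E z₀ : EuclideanSpace ℝ (Fin n)) := by rw [hA]; abel
      have hP0 : ⟪u, (Submodule.orthogonalProjectionOnto E z₀ : EuclideanSpace ℝ (Fin n))⟫ =
          ⟪u, z₀⟫ := by
        have h5 : (Submodule.orthogonalProjectionOnto E z₀ : EuclideanSpace ℝ (Fin n)) =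
            z₀ - (z₀ - (Submodule.orthogonalProjectionOnto E z₀ : EuclideanSpace ℝ (Fin n))) := by
          abel
        rw [h5, inner_sub_right, horth z₀ u huE]
        ring
      have hUA : ⟪u, A⟫ = ‖A‖ := by
        rw [hu_def, real_inner_smul_left, real_inner_self_eq_norm_sq]
        field_simp
      rw [hy_eq, inner_add_right, hUA, hP0]
      ring
    linarith only [h1, h2, h3, h4, hApos]

lemma proj_lip (E : Submodule ℝ (EuclideanSpace ℝ (Fin n))) (x z : EuclideanSpace ℝ (Fin n)) :
    ‖Submodule.orthogonalProjectionOnto E x - Submodule.orthogonalProjectionOnto E z‖ ≤ ‖x - z‖ := by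
  rw [← map_sub]
  calc ‖Submodule.orthogonalProjectionOnto E (x - z)‖
      ≤ ‖Submodule.orthogonalProjectionOnto E‖ * ‖x - z‖ := (Submodule.orthogonalProjectionOnto E).le_opNorm _
    _ ≤ 1 * ‖x - z‖ :=
        mul_le_mul_of_nonneg_right (Submodule.orthogonalProjectionOnto_norm_le E) (norm_nonneg _)
    _ = ‖x - z‖ := one_mul _

/-- Projections commute with `c`-duality: for a nonempty compact ball-body `K` and a subspace
`E` with orthogonal projection `P_E`, the set `P_E(K^c)` equals the `c`-dual of `P_E(K)`
computed inside `E`, and `P_E(K)` equals the `c`-dual of `P_E(K^c)` inside `E`. -/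
theorem stmt6 (n : ℕ) (hn : 1 ≤ n) (K : Set (EuclideanSpace ℝ (Fin n)))
    (hne : K.Nonempty) (hcomp : IsCompact K) (hbb : K = cDual (cDual K))
    (E : Submodule ℝ (EuclideanSpace ℝ (Fin n))) :
    (Submodule.orthogonalProjectionOnto E) '' (cDual K) =
        {y : E | ∀ x ∈ (Submodule.orthogonalProjectionOnto E) '' K, ‖x - y‖ ≤ 1} ∧
      (Submodule.orthogonalProjectionOnto E) '' K =
        {x : E | ∀ y ∈ (Submodule.orthogonalProjectionOnto E) '' (cDual K), ‖x - y‖ ≤ 1} := by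
  constructor
  · ext yy
    simp only [mem_image, mem_setOf_eq]
    constructor
    · rintro ⟨z, hz, rfl⟩ x hx
      obtain ⟨k, hk, rfl⟩ := hx
      exact le_trans (proj_lip E k z) (hz k hk)
    · intro hyy
      obtain ⟨z, hz, hz2⟩ := proj_cDual_key hn hne hcomp hbb E yy
        (fun k hk => hyy _ ⟨k, hk, rfl⟩)
      exact ⟨z, hz, hz2⟩
  · have hne' : (cDual K).Nonempty := cDual_nonempty hn hcomp hbb
    have hcomp' : IsCompact (cDual K) := isCompact_cDual hne
    have hbb' : cDual K = cDual (cDual (cDual K)) := by rw [← hbb]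
    ext xx
    simp only [mem_image, mem_setOf_eq]
    constructor
    · rintro ⟨k, hk, rfl⟩ yv hyv
      obtain ⟨z, hz, rfl⟩ := hyv
      exact le_trans (proj_lip E k z) (hz k hk)
    · intro hxx
      obtain ⟨z, hz, hz2⟩ := proj_cDual_key hn hne' hcomp' hbb' E xx
        (fun w hw => by rw [norm_sub_rev]; exact hxx _ ⟨w, hw, rfl⟩)
      rw [← hbb] at hz
      exact ⟨z, hz, hz2⟩
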